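/- Let X be a geodesic metric space, let f : [0,M] → X and g : J → X be length (unit-speed) parameterizations of geodesics [x',y'] and γ respectively. Suppose for each t ∈ [0,M] there exists s_t ∈ J with d(f(t), g(s_t)) < 2.5D. Then for all t, t' ∈ [0,M], | |s_t − s_{t'}| − |t − t'| | ≤ 5D; consequently the map t ↦ s_t coincides, up to additive error at most 10D, with a map of the form t ↦ ±t + C, and the geodesics [x',y'] and g([s_0, s_M]) are within Hausdorff distance 10D. -/
import Mathlib


open Metric Set

variable {X : Type*} [MetricSpace X]

/-- Nearest-point projection of the point `x` to the set `A`. -/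
noncomputable def proj (A : Set X) (x : X) : Set X :=
  {a | a ∈ A ∧ dist x a = infDist x A}

/-- Nearest-point projection of the set `B` to the set `A`. -/
noncomputable def projSet (A B : Set X) : Set X := ⋃ x ∈ B, proj A x

/-- Distance between two subsets of a metric space. -/
noncomputable def setDist (A B : Set X) : ℝ := sInf (Set.image2 dist A B)

/-- `γ` is a geodesic segment from `x` to `y` (image of a unit-speed parameterization). -/
def IsGeodesicSeg (γ : Set X) (x y : X) : Prop :=
  ∃ (f : ℝ → X) (L : ℝ), 0 ≤ L ∧
    (∀ s ∈ Icc 0 L, ∀ t ∈ Icc 0 L, dist (f s) (f t) = |s - t|) ∧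
    f 0 = x ∧ f L = y ∧ γ = f '' Icc 0 L

/-- `γ` is a geodesic segment. -/
def IsGeodesic (γ : Set X) : Prop := ∃ x y, IsGeodesicSeg γ x y

/-- `γ` is `D`-contracting: any geodesic at distance `> D` from `γ`
projects onto `γ` with diameter `< D`. -/
def IsContractingSet (D : ℝ) (γ : Set X) : Prop :=
  ∀ κ : Set X, IsGeodesic κ → D < setDist γ κ → diam (projSet γ κ) < D

/-- `X` is a geodesic metric space. -/
def GeodesicSpace (X : Type*) [MetricSpace X] : Prop :=
  ∀ x y : X, ∃ γ : Set X, IsGeodesicSeg γ x y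


/-- Upper/lower linear bounds on `s` when `s 0 ≤ s M`. -/
private lemma keyA (s : ℝ → ℝ) (M K : ℝ) (hM : 0 ≤ M)
    (h : ∀ t ∈ Icc (0:ℝ) M, ∀ t' ∈ Icc (0:ℝ) M, |(|s t - s t'| - |t - t'|)| ≤ K)
    (hord : s 0 ≤ s M) :
    ∀ t ∈ Icc (0:ℝ) M, s 0 + t - 2*K ≤ s t ∧ s t ≤ s 0 + t + K := by
  intro t ht
  have h0 : (0:ℝ) ∈ Icc (0:ℝ) M := ⟨le_rfl, hM⟩
  have hMm : M ∈ Icc (0:ℝ) M := ⟨hM, le_rfl⟩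
  have h1 := h t ht 0 h0
  have h2 := h M hMm t ht
  have h3 := h M hMm 0 h0
  rw [sub_zero, abs_of_nonneg ht.1] at h1
  rw [sub_zero, abs_of_nonneg hM, abs_of_nonneg (sub_nonneg.2 hord)] at h3
  rw [abs_of_nonneg (sub_nonneg.2 ht.2)] at h2
  have a1 := (abs_le.1 h1).2
  have a2 := (abs_le.1 h2).2
  have a3 := (abs_le.1 h3).1
  have b1 := le_abs_self (s t - s 0)
  have b2 := le_abs_self (s M - s t)
  exact ⟨by linarith, by linarith⟩

/-- Coarse surjectivity of `s` onto `[s 0, s M]`. -/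
private lemma keyB (s : ℝ → ℝ) (M K : ℝ) (hM : 0 ≤ M) (hK : 0 < K)
    (h : ∀ t ∈ Icc (0:ℝ) M, ∀ t' ∈ Icc (0:ℝ) M, |s t - s t'| ≤ |t - t'| + K)
    (u : ℝ) (hu : u ∈ Icc (s 0) (s M)) :
    ∃ t ∈ Icc (0:ℝ) M, |s t - u| ≤ 3*K/2 := by
  set T := {t | t ∈ Icc (0:ℝ) M ∧ s t ≤ u} with hT
  have h0T : (0:ℝ) ∈ T := ⟨⟨le_rfl, hM⟩, hu.1⟩
  have hne : T.Nonempty := ⟨0, h0T⟩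
  have hbdd : BddAbove T := ⟨M, fun x hx => hx.1.2⟩
  have hcM : sSup T ≤ M := csSup_le hne fun x hx => hx.1.2
  obtain ⟨t₁, ht₁T, ht₁⟩ := exists_lt_of_lt_csSup hne (show sSup T - K/2 < sSup T by linarith)
  rcases lt_or_ge (sSup T) M with hlt | hge
  · have ht₂c : sSup T < min (sSup T + K/2) M := lt_min (by linarith) hlt
    have ht₂I : min (sSup T + K/2) M ∈ Icc (0:ℝ) M :=
      ⟨le_trans (le_csSup hbdd h0T) ht₂c.le, min_le_right _ _⟩
    have ht₂T : min (sSup T + K/2) M ∉ T := fun hmem =>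
      absurd (le_csSup hbdd hmem) (not_le.2 ht₂c)
    have hst₂ : u < s (min (sSup T + K/2) M) := by
      by_contra hcon
      exact ht₂T ⟨ht₂I, not_lt.1 hcon⟩
    have ht₁c : t₁ ≤ sSup T := le_csSup hbdd ht₁T
    have hd := h _ ht₂I t₁ ht₁T.1
    have habs : |min (sSup T + K/2) M - t₁| ≤ K := by
      rw [abs_of_nonneg (by linarith)]
      have := min_le_left (sSup T + K/2) M
      linarith
    have hgap : s (min (sSup T + K/2) M) - s t₁ ≤ 2*K := by
      have := le_abs_self (s (min (sSup T + K/2) M) - s t₁); linarith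
    rcases le_or_gt (u - s t₁) K with hside | hside
    · exact ⟨t₁, ht₁T.1, by rw [abs_of_nonpos (by linarith [ht₁T.2])]; linarith [ht₁T.2, hK]⟩
    · exact ⟨_, ht₂I, by rw [abs_of_nonneg (by linarith)]; linarith⟩
  · have hd := h M ⟨hM, le_rfl⟩ t₁ ht₁T.1
    have h1 : |M - t₁| ≤ K/2 := by
      rw [abs_of_nonneg (by linarith [ht₁T.1.2])]
      linarith [ht₁T.1.2]
    have hst : u - s t₁ ≤ 3*K/2 := by
      have := le_abs_self (s M - s t₁)
      linarith [hu.2]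
    exact ⟨t₁, ht₁T.1, by rw [abs_of_nonpos (by linarith [ht₁T.2])]; linarith⟩

private lemma stmt17_aux {X : Type*} [MetricSpace X] (D M : ℝ) (hD : 0 < D) (hM : 0 ≤ M)
    (f g : ℝ → X) (J : Set ℝ) (hJ : J.OrdConnected)
    (hf : ∀ u ∈ Icc 0 M, ∀ v ∈ Icc 0 M, dist (f u) (f v) = |u - v|)
    (hg : ∀ u ∈ J, ∀ v ∈ J, dist (g u) (g v) = |u - v|)
    (s : ℝ → ℝ) (hsJ : ∀ t ∈ Icc 0 M, s t ∈ J)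
    (hclose : ∀ t ∈ Icc 0 M, dist (f t) (g (s t)) < 5 * D / 2)
    (hord : s 0 ≤ s M) :
    (∀ t ∈ Icc (0:ℝ) M, ∀ t' ∈ Icc (0:ℝ) M,
      |(|s t - s t'| - |t - t'|)| ≤ 5 * D) ∧
    (∃ C : ℝ, (∀ t ∈ Icc (0:ℝ) M, |s t - (t + C)| ≤ 10 * D) ∨
              (∀ t ∈ Icc (0:ℝ) M, |s t - (-t + C)| ≤ 10 * D)) ∧
    hausdorffDist (f '' Icc 0 M) (g '' uIcc (s 0) (s M)) ≤ 10 * D := by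
  have h0I : (0:ℝ) ∈ Icc (0:ℝ) M := ⟨le_rfl, hM⟩
  have hMI : M ∈ Icc (0:ℝ) M := ⟨hM, le_rfl⟩
  -- Part 1
  have part1 : ∀ t ∈ Icc (0:ℝ) M, ∀ t' ∈ Icc (0:ℝ) M,
      |(|s t - s t'| - |t - t'|)| ≤ 5 * D := by
    intro t ht t' ht'
    have e1 : dist (g (s t)) (g (s t')) = |s t - s t'| := hg _ (hsJ t ht) _ (hsJ t' ht')
    have e2 : dist (f t) (f t') = |t - t'| := hf t ht t' ht'
    have d1 := hclose t ht
    have d2 := hclose t' ht'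
    have u1 := dist_triangle4 (g (s t)) (f t) (f t') (g (s t'))
    have u2 := dist_triangle4 (f t) (g (s t)) (g (s t')) (f t')
    rw [e1, e2] at u1 u2
    have c1 : dist (g (s t)) (f t) = dist (f t) (g (s t)) := dist_comm _ _
    have c2 : dist (g (s t')) (f t') = dist (f t') (g (s t')) := dist_comm _ _
    rw [abs_le]
    constructor <;> linarith
  have hpair : ∀ t ∈ Icc (0:ℝ) M, ∀ t' ∈ Icc (0:ℝ) M, |s t - s t'| ≤ |t - t'| + 5*D := by
    intro t ht t' ht'
    have := (abs_le.1 (part1 t ht t' ht')).2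
    linarith
  have hA := keyA s M (5*D) hM part1 hord
  have hsM : M - 5*D ≤ s M - s 0 := by
    have h3 := part1 M hMI 0 h0I
    rw [sub_zero, abs_of_nonneg hM, abs_of_nonneg (sub_nonneg.2 hord)] at h3
    linarith [(abs_le.1 h3).1]
  -- Part 2
  have part2 : ∀ t ∈ Icc (0:ℝ) M, |s t - (t + s 0)| ≤ 10 * D := by
    intro t ht
    obtain ⟨hl, hr⟩ := hA t ht
    rw [abs_le]
    constructor <;> linarith
  -- Part 3
  have huIcc : uIcc (s 0) (s M) = Icc (s 0) (s M) := uIcc_of_le hord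
  have Adir : ∀ t ∈ Icc (0:ℝ) M, ∃ u ∈ Icc (s 0) (s M), |s t - u| ≤ 15*D/2 := by
    intro t ht
    obtain ⟨hl, hr⟩ := hA t ht
    rcases le_total (s t) (s 0) with hlo | hlo
    · refine ⟨s 0, ⟨le_rfl, hord⟩, ?_⟩
      rw [abs_of_nonpos (by linarith)]
      have hb1 : s 0 - s t ≤ t + 5*D := by
        have := hpair 0 h0I t ht
        rw [zero_sub, abs_neg, abs_of_nonneg ht.1] at this
        linarith [le_abs_self (s 0 - s t)]
      rcases le_total t (5*D/2) with h' | h' <;> linarith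
    · rcases le_total (s t) (s M) with hhi | hhi
      · exact ⟨s t, ⟨hlo, hhi⟩, by rw [sub_self, abs_zero]; linarith⟩
      · refine ⟨s M, ⟨hord, le_rfl⟩, ?_⟩
        rw [abs_of_nonneg (by linarith)]
        have hb1 : s t - s M ≤ (M - t) + 5*D := by
          have := hpair t ht M hMI
          rw [abs_of_nonpos (by linarith [ht.2] : t - M ≤ 0)] at this
          linarith [le_abs_self (s t - s M)]
        rcases le_total (M - t) (5*D/2) with h' | h' <;> linarith
  refine ⟨part1, ⟨s 0, Or.inl part2⟩, ?_⟩
  rw [huIcc]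
  have hIccJ : Icc (s 0) (s M) ⊆ J := hJ.out (hsJ 0 h0I) (hsJ M hMI)
  apply hausdorffDist_le_of_infDist (by linarith)
  · rintro x ⟨t, ht, rfl⟩
    obtain ⟨u, hu, hub⟩ := Adir t ht
    have hx : dist (f t) (g u) ≤ 10 * D := by
      have tr := dist_triangle (f t) (g (s t)) (g u)
      rw [hg _ (hsJ t ht) _ (hIccJ hu)] at tr
      linarith [hclose t ht]
    exact le_trans (infDist_le_dist_of_mem ⟨u, hu, rfl⟩) hx
  · rintro x ⟨u, hu, rfl⟩
    obtain ⟨t, ht, htb⟩ := keyB s M (5*D) hM (by linarith) hpair u hu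
    have hx : dist (g u) (f t) ≤ 10 * D := by
      have tr := dist_triangle (g u) (g (s t)) (f t)
      rw [hg _ (hIccJ hu) _ (hsJ t ht), abs_sub_comm u (s t),
        dist_comm (g (s t)) (f t)] at tr
      have hc := hclose t ht
      linarith
    exact le_trans (infDist_le_dist_of_mem ⟨t, ht, rfl⟩) hx

/-- coarse rigidity of coarsely distance-preserving maps between
the parameter intervals of two geodesics. -/
theorem stmt17 {X : Type*} [MetricSpace X] (D M : ℝ) (hD : 0 < D) (hM : 0 ≤ M)
    (f g : ℝ → X) (J : Set ℝ) (hJ : J.OrdConnected)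
    (hf : ∀ u ∈ Icc 0 M, ∀ v ∈ Icc 0 M, dist (f u) (f v) = |u - v|)
    (hg : ∀ u ∈ J, ∀ v ∈ J, dist (g u) (g v) = |u - v|)
    (s : ℝ → ℝ) (hsJ : ∀ t ∈ Icc 0 M, s t ∈ J)
    (hclose : ∀ t ∈ Icc 0 M, dist (f t) (g (s t)) < 5 * D / 2) :
    (∀ t ∈ Icc (0:ℝ) M, ∀ t' ∈ Icc (0:ℝ) M,
      |(|s t - s t'| - |t - t'|)| ≤ 5 * D) ∧
    (∃ C : ℝ, (∀ t ∈ Icc (0:ℝ) M, |s t - (t + C)| ≤ 10 * D) ∨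
              (∀ t ∈ Icc (0:ℝ) M, |s t - (-t + C)| ≤ 10 * D)) ∧
    hausdorffDist (f '' Icc 0 M) (g '' uIcc (s 0) (s M)) ≤ 10 * D := by
  rcases le_total (s 0) (s M) with hord | hord
  · exact stmt17_aux D M hD hM f g J hJ hf hg s hsJ hclose hord
  · -- reflect through `u ↦ -u`
    have hJ' : (Neg.neg ⁻¹' J : Set ℝ).OrdConnected := by
      constructor
      rintro x hx y hy z hz
      exact hJ.out hy hx ⟨neg_le_neg hz.2, neg_le_neg hz.1⟩
    have hg' : ∀ u ∈ (Neg.neg ⁻¹' J : Set ℝ), ∀ v ∈ (Neg.neg ⁻¹' J : Set ℝ),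
        dist ((fun u => g (-u)) u) ((fun u => g (-u)) v) = |u - v| := by
      intro u hu v hv
      show dist (g (-u)) (g (-v)) = |u - v|
      rw [hg _ hu _ hv, neg_sub_neg, abs_sub_comm]
    have hsJ' : ∀ t ∈ Icc (0:ℝ) M, (fun t => -(s t)) t ∈ (Neg.neg ⁻¹' J : Set ℝ) := by
      intro t ht
      simpa using hsJ t ht
    have hclose' : ∀ t ∈ Icc (0:ℝ) M,
        dist (f t) ((fun u => g (-u)) ((fun t => -(s t)) t)) < 5 * D / 2 := by
      intro t ht
      simpa using hclose t ht
    obtain ⟨p1, ⟨C, hC⟩, p3⟩ := stmt17_aux D M hD hM f (fun u => g (-u))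
      (Neg.neg ⁻¹' J) hJ' hf hg' (fun t => -(s t)) hsJ' hclose'
      (by simpa using neg_le_neg hord)
    refine ⟨?_, ?_, ?_⟩
    · intro t ht t' ht'
      have := p1 t ht t' ht'
      rwa [show -(s t) - -(s t') = -(s t - s t') by ring, abs_neg] at this
    · refine ⟨-C, ?_⟩
      rcases hC with h | h
      · right
        intro t ht
        have := h t ht
        rwa [show -(s t) - (t + C) = -(s t - (-t + -C)) by ring, abs_neg] at this
      · left
        intro t ht
        have := h t ht
        rwa [show -(s t) - (-t + C) = -(s t - (t + -C)) by ring, abs_neg] at this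
    · have himg : (fun u => g (-u)) '' uIcc (-(s 0)) (-(s M)) = g '' uIcc (s 0) (s M) := by
        ext x
        simp only [mem_image, mem_uIcc]
        constructor
        · rintro ⟨u, hu, rfl⟩
          exact ⟨-u, by rcases hu with ⟨h1, h2⟩ | ⟨h1, h2⟩ <;>
            first
              | exact Or.inl ⟨by linarith, by linarith⟩
              | exact Or.inr ⟨by linarith, by linarith⟩, rfl⟩
        · rintro ⟨v, hv, rfl⟩
          refine ⟨-v, by rcases hv with ⟨h1, h2⟩ | ⟨h1, h2⟩ <;>
            first
              | exact Or.inl ⟨by linarith, by linarith⟩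
              | exact Or.inr ⟨by linarith, by linarith⟩, by rw [neg_neg]⟩
      rwa [himg] at p3
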